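/- Under the same setup, for every integer r ≥ 1 with e_{ij}^{(r)} = E_i[X_1^r 1(J_1 = j)] finite for all i,j, the r-th moments E_i^{(r)} = E_i[W_0^r] satisfy the recurrence E_i^{(r)} = f_i^{(r)} + Σ_{j ≠ 0} p_{ij} E_j^{(r)}, where f_i^{(r)} = e_{i0}^{(r)} + Σ_{j ≠ 0} Σ_{l=0}^{r-1} C(r,l) e_{ij}^{(r-l)} E_j^{(l)}, with E_j^{(0)} = 1. -/

import Mathlib

open MeasureTheory ENNReal

/-- Prepend one step to a trajectory of a Markov renewal process. The path `ω` encodes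
`ω n = (J_{n+1}, X_{n+1})`. -/
def consStep {X : Type*} (q : X × ℝ) (ω : ℕ → X × ℝ) : ℕ → X × ℝ
  | 0 => q
  | n + 1 => ω n

/-- Accumulated reward `W₀ = ∑_{n=1}^{U₀} X_n` up to the first hitting time
`U₀ = min{n ≥ 1 : J_n = 0}` (in the path encoding `ω n = (J_{n+1}, X_{n+1})`). -/
noncomputable def hitReward {X : Type*} [Zero X] (ω : ℕ → X × ℝ) : ℝ :=
  ∑ n ∈ Finset.range (sInf {n | (ω n).1 = 0} + 1), (ω n).2

/-- The sojourn moments `e_{ij}^{(l)} = E_i[X₁^l 1(J₁ = j)]`. -/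
noncomputable def sojournMoment {m : ℕ} (Q : Fin (m + 1) → Measure (Fin (m + 1) × ℝ))
    (i j : Fin (m + 1)) (l : ℕ) : ℝ≥0∞ :=
  ∫⁻ q in {q | q.1 = j}, (ENNReal.ofReal q.2) ^ l ∂ Q i

variable {m : ℕ}

lemma measurable_consStep_fixed (q : Fin (m+1) × ℝ) :
    Measurable (consStep (X := Fin (m+1)) q) := by
  apply measurable_pi_lambda
  intro n
  cases n with
  | zero => exact measurable_const
  | succ k => exact measurable_pi_apply k

lemma measurable_consStep2 :
    Measurable (fun p : (Fin (m+1) × ℝ) × (ℕ → Fin (m+1) × ℝ) => consStep p.1 p.2) := by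
  apply measurable_pi_lambda
  intro n
  cases n with
  | zero => exact measurable_fst
  | succ k => exact (measurable_pi_apply k).comp measurable_snd

lemma measurable_hitIndex :
    Measurable (fun ω : ℕ → Fin (m+1) × ℝ => sInf {n | (ω n).1 = 0}) := by
  apply measurable_to_countable'
  intro k
  have hset : (fun ω : ℕ → Fin (m+1) × ℝ => sInf {n | (ω n).1 = 0}) ⁻¹' {k}
      = ({ω : ℕ → Fin (m+1) × ℝ | (ω k).1 = 0 ∧ ∀ j < k, (ω j).1 ≠ 0}
        ∪ {ω : ℕ → Fin (m+1) × ℝ | k = 0 ∧ ∀ n, (ω n).1 ≠ 0}) := by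
    ext ω
    simp only [Set.mem_preimage, Set.mem_singleton_iff, Set.mem_union, Set.mem_setOf_eq]
    constructor
    · intro h
      by_cases hne : {n | (ω n).1 = 0}.Nonempty
      · left
        refine ⟨h ▸ Nat.sInf_mem hne, fun j hj hj0 => ?_⟩
        have hjm : j ∈ {n | (ω n).1 = 0} := hj0
        have := Nat.sInf_le hjm
        omega
      · right
        rw [Set.not_nonempty_iff_eq_empty] at hne
        refine ⟨by rw [← h, hne, Nat.sInf_empty], fun n hn => ?_⟩
        have : n ∈ {n | (ω n).1 = 0} := hn
        simp [hne] at this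
    · rintro (⟨hk, hmin⟩ | ⟨hk, hall⟩)
      · refine le_antisymm (Nat.sInf_le hk) ?_
        by_contra hlt
        push_neg at hlt
        have hmem : sInf {n | (ω n).1 = 0} ∈ {n | (ω n).1 = 0} := Nat.sInf_mem ⟨k, hk⟩
        exact hmin _ hlt hmem
      · have : {n | (ω n).1 = 0} = ∅ := by
          ext n; simp [hall n]
        rw [this, Nat.sInf_empty, hk]
  rw [hset]
  apply MeasurableSet.union
  · refine MeasurableSet.inter ?_ ?_
    · exact (measurable_fst.comp (measurable_pi_apply k)) (measurableSet_singleton 0)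
    · have h2 : {ω : ℕ → Fin (m+1) × ℝ | ∀ j < k, (ω j).1 ≠ 0}
          = ⋂ j ∈ Set.Iio k, {ω : ℕ → Fin (m+1) × ℝ | (ω j).1 ≠ 0} := by
        ext ω; simp
      show MeasurableSet {ω : ℕ → Fin (m+1) × ℝ | ∀ j < k, (ω j).1 ≠ 0}
      rw [h2]
      refine MeasurableSet.biInter (Set.to_countable _) fun j _ => ?_
      exact ((measurable_fst.comp (measurable_pi_apply j)) (measurableSet_singleton 0)).compl
  · by_cases hk : k = 0
    · have h2 : {ω : ℕ → Fin (m+1) × ℝ | k = 0 ∧ ∀ n, (ω n).1 ≠ 0}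
          = ⋂ n : ℕ, {ω : ℕ → Fin (m+1) × ℝ | (ω n).1 ≠ 0} := by
        ext ω; simp [hk]
      rw [h2]
      refine MeasurableSet.iInter fun n => ?_
      exact ((measurable_fst.comp (measurable_pi_apply n)) (measurableSet_singleton 0)).compl
    · have h2 : {ω : ℕ → Fin (m+1) × ℝ | k = 0 ∧ ∀ n, (ω n).1 ≠ 0} = ∅ := by
        ext ω; simp [hk]
      rw [h2]; exact MeasurableSet.empty

lemma measurable_hitReward :
    Measurable (hitReward (X := Fin (m+1))) := by
  intro t ht
  have : hitReward (X := Fin (m+1)) ⁻¹' t =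
      ⋃ k : ℕ, ({ω : ℕ → Fin (m+1) × ℝ | sInf {n | (ω n).1 = 0} = k}
        ∩ (fun ω : ℕ → Fin (m+1) × ℝ => ∑ n ∈ Finset.range (k + 1), (ω n).2) ⁻¹' t) := by
    ext ω
    simp only [Set.mem_preimage, Set.mem_iUnion, Set.mem_inter_iff, Set.mem_setOf_eq]
    constructor
    · intro h
      exact ⟨sInf {n | (ω n).1 = 0}, rfl, h⟩
    · rintro ⟨k, hk, h⟩
      unfold hitReward
      rw [hk]; exact h
  rw [this]
  refine MeasurableSet.iUnion fun k => MeasurableSet.inter ?_ ?_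
  · exact measurable_hitIndex (measurableSet_singleton k)
  · refine Finset.measurable_sum _ (fun n _ => measurable_snd.comp (measurable_pi_apply n)) ht
lemma hitReward_cons_zero (q : Fin (m+1) × ℝ) (hq : q.1 = 0) (ω : ℕ → Fin (m+1) × ℝ) :
    hitReward (consStep q ω) = q.2 := by
  have h0 : sInf {n | ((consStep q ω) n).1 = 0} = 0 :=
    Nat.sInf_eq_zero.mpr (Or.inl (by simpa [consStep] using hq))
  unfold hitReward
  rw [h0]
  simp [consStep]

lemma hitReward_cons_ne (q : Fin (m+1) × ℝ) (hq : q.1 ≠ 0) (ω : ℕ → Fin (m+1) × ℝ)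
    (hω : ∃ n, (ω n).1 = 0) :
    hitReward (consStep q ω) = q.2 + hitReward ω := by
  set N := sInf {n | (ω n).1 = 0} with hN
  have hne : {n | (ω n).1 = 0}.Nonempty := hω
  have hNmem : (ω N).1 = 0 := Nat.sInf_mem hne
  have hkey : sInf {n | ((consStep q ω) n).1 = 0} = N + 1 := by
    have hmem : N + 1 ∈ {n | ((consStep q ω) n).1 = 0} := by
      show ((consStep q ω) (N + 1)).1 = 0
      simpa [consStep] using hNmem
    refine le_antisymm (Nat.sInf_le hmem) ?_
    by_contra hlt
    push_neg at hlt
    have hmem2 : sInf {n | ((consStep q ω) n).1 = 0} ∈ {n | ((consStep q ω) n).1 = 0} :=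
      Nat.sInf_mem ⟨N + 1, hmem⟩
    cases hMv : sInf {n | ((consStep q ω) n).1 = 0} with
    | zero =>
      rw [hMv] at hmem2
      exact hq (by simpa [consStep] using hmem2)
    | succ l =>
      rw [hMv] at hmem2 hlt
      have hl0 : (ω l).1 = 0 := by simpa [consStep] using hmem2
      have hlm : l ∈ {n | (ω n).1 = 0} := hl0
      have h2 : N ≤ l := hN ▸ Nat.sInf_le hlm
      omega
  unfold hitReward
  rw [hkey, Finset.sum_range_succ' (fun n => ((consStep q ω) n).2) (N + 1)]
  simp only [consStep]
  rw [add_comm]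
lemma measurable_kernel (μ : Fin (m+1) → Measure (ℕ → Fin (m+1) × ℝ))
    (hprob : ∀ i, IsProbabilityMeasure (μ i)) :
    Measurable (fun q : Fin (m+1) × ℝ => (μ q.1).map (consStep q)) := by
  apply Measure.measurable_of_measurable_coe
  intro s hs
  have h1 : ∀ q : Fin (m+1) × ℝ,
      (μ q.1).map (consStep q) s = μ q.1 (Prod.mk q ⁻¹' {p : (Fin (m+1) × ℝ) × (ℕ → Fin (m+1) × ℝ) | consStep p.1 p.2 ∈ s}) := by
    intro q
    rw [Measure.map_apply (measurable_consStep_fixed q) hs]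
    rfl
  simp_rw [h1]
  have hT : MeasurableSet {p : (Fin (m+1) × ℝ) × (ℕ → Fin (m+1) × ℝ) | consStep p.1 p.2 ∈ s} :=
    measurable_consStep2 hs
  have h2 : ∀ j : Fin (m+1), Measurable (fun q : Fin (m+1) × ℝ =>
      μ j (Prod.mk q ⁻¹' {p : (Fin (m+1) × ℝ) × (ℕ → Fin (m+1) × ℝ) | consStep p.1 p.2 ∈ s})) :=
    fun j => by
      have := hprob j
      exact measurable_measure_prodMk_left hT
  have h3 : (fun q : Fin (m+1) × ℝ =>
      μ q.1 (Prod.mk q ⁻¹' {p : (Fin (m+1) × ℝ) × (ℕ → Fin (m+1) × ℝ) | consStep p.1 p.2 ∈ s}))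
      = fun q => ∑ j : Fin (m+1), Set.indicator {p : Fin (m+1) × ℝ | p.1 = j}
        (fun p => μ j (Prod.mk p ⁻¹' {p : (Fin (m+1) × ℝ) × (ℕ → Fin (m+1) × ℝ) | consStep p.1 p.2 ∈ s})) q := by
    funext q
    rw [Finset.sum_eq_single q.1]
    · rw [Set.indicator_of_mem (by exact rfl)]
    · intro j _ hj
      refine Set.indicator_of_notMem (fun h => hj ?_) _
      exact (Set.mem_setOf_eq ▸ h).symm
    · intro h; exact absurd (Finset.mem_univ _) h
  rw [h3]
  exact Finset.measurable_sum _ fun j _ =>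
    (h2 j).indicator (measurable_fst (measurableSet_singleton j))

lemma step_lintegral (Q : Fin (m+1) → Measure (Fin (m+1) × ℝ))
    (μ : Fin (m+1) → Measure (ℕ → Fin (m+1) × ℝ))
    (hprob : ∀ i, IsProbabilityMeasure (μ i))
    (hMRP : ∀ (i : Fin (m+1)) (A : Set (ℕ → Fin (m+1) × ℝ)), MeasurableSet A →
      μ i A = ∫⁻ q, μ q.1 {ω | consStep q ω ∈ A} ∂ Q i)
    (i : Fin (m+1)) (f : (ℕ → Fin (m+1) × ℝ) → ℝ≥0∞) (hf : Measurable f) :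
    ∫⁻ ω, f ω ∂ μ i = ∫⁻ q, ∫⁻ ω, f (consStep q ω) ∂ μ q.1 ∂ Q i := by
  have hker := measurable_kernel (m := m) μ hprob
  have hbind : μ i = (Q i).bind (fun q => (μ q.1).map (consStep q)) := by
    ext A hA
    rw [Measure.bind_apply hA hker.aemeasurable, hMRP i A hA]
    congr 1
    funext q
    rw [Measure.map_apply (measurable_consStep_fixed q) hA]
    rfl
  rw [hbind, Measure.lintegral_bind hker.aemeasurable hf.aemeasurable]
  congr 1
  funext q
  rw [lintegral_map hf (measurable_consStep_fixed q)]
lemma nonneg_ae (Q : Fin (m+1) → Measure (Fin (m+1) × ℝ))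
    (hQ : ∀ i, IsProbabilityMeasure (Q i))
    (hQpos : ∀ i, Q i {q | q.2 < 0} = 0)
    (μ : Fin (m+1) → Measure (ℕ → Fin (m+1) × ℝ))
    (hprob : ∀ i, IsProbabilityMeasure (μ i))
    (hMRP : ∀ (i : Fin (m+1)) (A : Set (ℕ → Fin (m+1) × ℝ)), MeasurableSet A →
      μ i A = ∫⁻ q, μ q.1 {ω | consStep q ω ∈ A} ∂ Q i)
    (i : Fin (m+1)) : ∀ᵐ ω ∂ μ i, ∀ n, 0 ≤ (ω n).2 := by
  have key : ∀ n, ∀ i, μ i {ω : ℕ → Fin (m+1) × ℝ | (ω n).2 < 0} = 0 := by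
    intro n
    induction n with
    | zero =>
      intro i
      have hA : MeasurableSet {ω : ℕ → Fin (m+1) × ℝ | (ω 0).2 < 0} :=
        measurableSet_lt (measurable_snd.comp (measurable_pi_apply 0)) measurable_const
      rw [hMRP i _ hA]
      have h1 : ∀ q : Fin (m+1) × ℝ,
          μ q.1 {ω | consStep q ω ∈ {ω : ℕ → Fin (m+1) × ℝ | (ω 0).2 < 0}}
          = Set.indicator {q : Fin (m+1) × ℝ | q.2 < 0} 1 q := by
        intro q
        by_cases h : q.2 < 0
        · have : {ω : ℕ → Fin (m+1) × ℝ | consStep q ω ∈ {ω : ℕ → Fin (m+1) × ℝ | (ω 0).2 < 0}} = Set.univ := by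
            ext ω; simp [consStep, h]
          rw [this]
          simp [Set.indicator, h, (hprob q.1).measure_univ]
        · have : {ω : ℕ → Fin (m+1) × ℝ | consStep q ω ∈ {ω : ℕ → Fin (m+1) × ℝ | (ω 0).2 < 0}} = ∅ := by
            ext ω; simp [consStep, h]
          rw [this]
          simp [Set.indicator, h]
      simp_rw [h1]
      rw [lintegral_indicator_one
        (show MeasurableSet {q : Fin (m+1) × ℝ | q.2 < 0} from
          measurableSet_lt measurable_snd measurable_const)]
      exact hQpos i
    | succ n ih =>
      intro i
      have hA : MeasurableSet {ω : ℕ → Fin (m+1) × ℝ | (ω (n+1)).2 < 0} :=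
        measurableSet_lt (measurable_snd.comp (measurable_pi_apply (n+1))) measurable_const
      rw [hMRP i _ hA]
      have h1 : ∀ q : Fin (m+1) × ℝ,
          μ q.1 {ω | consStep q ω ∈ {ω : ℕ → Fin (m+1) × ℝ | (ω (n+1)).2 < 0}} = 0 := by
        intro q
        have : {ω : ℕ → Fin (m+1) × ℝ | consStep q ω ∈ {ω : ℕ → Fin (m+1) × ℝ | (ω (n+1)).2 < 0}}
            = {ω : ℕ → Fin (m+1) × ℝ | (ω n).2 < 0} := by
          ext ω; simp [consStep]
        rw [this]
        exact ih q.1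
      simp_rw [h1]
      simp
  rw [ae_all_iff]
  intro n
  rw [ae_iff]
  have : {ω : ℕ → Fin (m+1) × ℝ | ¬ 0 ≤ (ω n).2} = {ω : ℕ → Fin (m+1) × ℝ | (ω n).2 < 0} := by
    ext ω; simp [not_le]
  rw [this]
  exact key n i

lemma hit_ae (μ : Fin (m+1) → Measure (ℕ → Fin (m+1) × ℝ))
    (hprob : ∀ i, IsProbabilityMeasure (μ i))
    (hhit : ∀ i, μ i {ω | ∃ n, (ω n).1 = 0} = 1)
    (i : Fin (m+1)) : ∀ᵐ ω ∂ μ i, ∃ n, (ω n).1 = 0 := by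
  have hs : MeasurableSet {ω : ℕ → Fin (m+1) × ℝ | ∃ n, (ω n).1 = 0} := by
    have : {ω : ℕ → Fin (m+1) × ℝ | ∃ n, (ω n).1 = 0}
        = ⋃ n, {ω : ℕ → Fin (m+1) × ℝ | (ω n).1 = 0} := by
      ext ω; simp
    rw [this]
    exact MeasurableSet.iUnion fun n =>
      (measurable_fst.comp (measurable_pi_apply n)) (measurableSet_singleton 0)
  rw [ae_iff]
  have h2 : {ω : ℕ → Fin (m+1) × ℝ | ¬ ∃ n, (ω n).1 = 0}
      = {ω : ℕ → Fin (m+1) × ℝ | ∃ n, (ω n).1 = 0}ᶜ := rfl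
  rw [h2, measure_compl hs (by exact (measure_ne_top _ _)), hhit i,
    (hprob i).measure_univ]
  simp

/-- For every `r ≥ 1` with all moments `e_{ij}^{(l)}`, `l ≤ r`, finite, the
`r`-th moments `E_i^{(r)} = E_i[W₀^r]` of the accumulated reward satisfy
`E_i^{(r)} = f_i^{(r)} + ∑_{j ≠ 0} p_{ij} E_j^{(r)}` where
`f_i^{(r)} = e_{i0}^{(r)} + ∑_{j ≠ 0} ∑_{l=0}^{r-1} C(r,l) e_{ij}^{(r-l)} E_j^{(l)}`
and `E_j^{(0)} = 1`. -/
theorem rth_moment_hitting_reward_system {m : ℕ}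
    (Q : Fin (m + 1) → Measure (Fin (m + 1) × ℝ))
    (hQ : ∀ i, IsProbabilityMeasure (Q i))
    (hQpos : ∀ i, Q i {q | q.2 < 0} = 0)
    (μ : Fin (m + 1) → Measure (ℕ → Fin (m + 1) × ℝ))
    (hprob : ∀ i, IsProbabilityMeasure (μ i))
    (hMRP : ∀ (i : Fin (m + 1)) (A : Set (ℕ → Fin (m + 1) × ℝ)), MeasurableSet A →
      μ i A = ∫⁻ q, μ q.1 {ω | consStep q ω ∈ A} ∂ Q i)
    (hhit : ∀ i, μ i {ω | ∃ n, (ω n).1 = 0} = 1)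
    (r : ℕ) (hr : 1 ≤ r)
    (hfin : ∀ i j, ∀ l ≤ r, sojournMoment Q i j l ≠ ⊤) :
    ∀ i, ∫⁻ ω, ENNReal.ofReal (hitReward ω) ^ r ∂ μ i =
      (sojournMoment Q i 0 r +
        ∑ j ∈ Finset.univ.erase 0, ∑ l ∈ Finset.range r,
          (r.choose l : ℝ≥0∞) * sojournMoment Q i j (r - l) *
            ∫⁻ ω, ENNReal.ofReal (hitReward ω) ^ l ∂ μ j) +
      ∑ j ∈ Finset.univ.erase 0,
        Q i {q | q.1 = j} * ∫⁻ ω, ENNReal.ofReal (hitReward ω) ^ r ∂ μ j := by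
  classical
  intro i
  have hfl : ∀ l : ℕ, Measurable fun ω : ℕ → Fin (m+1) × ℝ => ENNReal.ofReal (hitReward ω) ^ l :=
    fun l => (ENNReal.measurable_ofReal.comp measurable_hitReward).pow_const l
  rw [step_lintegral Q μ hprob hMRP i _ (hfl r)]
  set G : Fin (m+1) × ℝ → ℝ≥0∞ := fun q =>
    if q.1 = 0 then ENNReal.ofReal q.2 ^ r
    else ∑ l ∈ Finset.range (r+1), (r.choose l : ℝ≥0∞) * ENNReal.ofReal q.2 ^ (r-l) *
      ∫⁻ ω, ENNReal.ofReal (hitReward ω) ^ l ∂ μ q.1 with hG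
  have hae : (fun q : Fin (m+1) × ℝ =>
      ∫⁻ ω, ENNReal.ofReal (hitReward (consStep q ω)) ^ r ∂ μ q.1) =ᵐ[Q i] G := by
    have h0 : ∀ᵐ q : Fin (m+1) × ℝ ∂ Q i, 0 ≤ q.2 := by
      rw [ae_iff]
      have he : {q : Fin (m+1) × ℝ | ¬ 0 ≤ q.2} = {q : Fin (m+1) × ℝ | q.2 < 0} := by
        ext q; simp [not_le]
      rw [he]; exact hQpos i
    filter_upwards [h0] with q hq2
    by_cases hq1 : q.1 = 0
    · simp only [hG, if_pos hq1]
      calc ∫⁻ ω, ENNReal.ofReal (hitReward (consStep q ω)) ^ r ∂ μ q.1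
          = ∫⁻ _ω, ENNReal.ofReal q.2 ^ r ∂ μ q.1 :=
            lintegral_congr fun ω => by rw [hitReward_cons_zero q hq1]
        _ = ENNReal.ofReal q.2 ^ r := by
            rw [lintegral_const, (hprob q.1).measure_univ, mul_one]
    · simp only [hG, if_neg hq1]
      have hcong : ∫⁻ ω, ENNReal.ofReal (hitReward (consStep q ω)) ^ r ∂ μ q.1
          = ∫⁻ ω, ∑ l ∈ Finset.range (r+1),
              ((r.choose l : ℝ≥0∞) * ENNReal.ofReal q.2 ^ (r-l)) *
                ENNReal.ofReal (hitReward ω) ^ l ∂ μ q.1 := by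
        apply lintegral_congr_ae
        filter_upwards [nonneg_ae Q hQ hQpos μ hprob hMRP q.1, hit_ae μ hprob hhit q.1]
          with ω hω1 hω2
        have hWnn : 0 ≤ hitReward ω := Finset.sum_nonneg fun n _ => hω1 n
        rw [hitReward_cons_ne q hq1 ω hω2, ENNReal.ofReal_add hq2 hWnn]
        rw [add_comm (ENNReal.ofReal q.2), add_pow]
        apply Finset.sum_congr rfl
        intro l _
        ring
      rw [hcong, lintegral_finset_sum _ (fun l _ => (hfl l).const_mul _)]
      apply Finset.sum_congr rfl
      intro l _
      rw [lintegral_const_mul _ (hfl l), mul_assoc]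
  rw [lintegral_congr_ae hae]
  have hGmeas : Measurable G := by
    refine Measurable.ite (measurable_fst (measurableSet_singleton 0)) ?_ ?_
    · exact (ENNReal.measurable_ofReal.comp measurable_snd).pow_const r
    · refine Finset.measurable_sum _ fun l _ => ?_
      refine (measurable_const.mul
        ((ENNReal.measurable_ofReal.comp measurable_snd).pow_const _)).mul ?_
      exact (measurable_from_top
        (f := fun j : Fin (m+1) => ∫⁻ ω, ENNReal.ofReal (hitReward ω) ^ l ∂ μ j)).comp
        measurable_fst
  have hsplit : ∫⁻ q, G q ∂ Q i
      = ∑ j : Fin (m+1), ∫⁻ q in {p : Fin (m+1) × ℝ | p.1 = j}, G q ∂ Q i := by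
    have h1 : ∀ q : Fin (m+1) × ℝ,
        G q = ∑ j : Fin (m+1), Set.indicator {p : Fin (m+1) × ℝ | p.1 = j} G q := by
      intro q
      rw [Finset.sum_eq_single q.1]
      · rw [Set.indicator_of_mem (show q ∈ {p : Fin (m+1) × ℝ | p.1 = q.1} from rfl)]
      · intro j _ hj
        refine Set.indicator_of_notMem (fun h => hj ?_) _
        exact (Set.mem_setOf_eq ▸ h).symm
      · intro h; exact absurd (Finset.mem_univ _) h
    calc ∫⁻ q, G q ∂ Q i
        = ∫⁻ q, ∑ j : Fin (m+1), Set.indicator {p : Fin (m+1) × ℝ | p.1 = j} G q ∂ Q i :=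
          lintegral_congr h1
      _ = ∑ j : Fin (m+1), ∫⁻ q, Set.indicator {p : Fin (m+1) × ℝ | p.1 = j} G q ∂ Q i :=
          lintegral_finset_sum _ (fun j _ =>
            hGmeas.indicator (measurable_fst (measurableSet_singleton j)))
      _ = ∑ j : Fin (m+1), ∫⁻ q in {p : Fin (m+1) × ℝ | p.1 = j}, G q ∂ Q i := by
          refine Finset.sum_congr rfl fun j _ => ?_
          rw [lintegral_indicator (show MeasurableSet {p : Fin (m+1) × ℝ | p.1 = j} from
            measurable_fst (measurableSet_singleton j))]
  rw [hsplit, ← Finset.add_sum_erase _ _ (Finset.mem_univ (0 : Fin (m+1)))]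
  have hterm0 : ∫⁻ q in {p : Fin (m+1) × ℝ | p.1 = 0}, G q ∂ Q i = sojournMoment Q i 0 r := by
    unfold sojournMoment
    apply setLIntegral_congr_fun (measurable_fst (measurableSet_singleton 0))
    intro q hq
    have hq1 : q.1 = 0 := hq
    simp [hG, hq1]
  have hterm : ∀ j ∈ Finset.univ.erase (0 : Fin (m+1)),
      ∫⁻ q in {p : Fin (m+1) × ℝ | p.1 = j}, G q ∂ Q i
      = (∑ l ∈ Finset.range r, (r.choose l : ℝ≥0∞) * sojournMoment Q i j (r - l) *
          ∫⁻ ω, ENNReal.ofReal (hitReward ω) ^ l ∂ μ j)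
        + Q i {q : Fin (m+1) × ℝ | q.1 = j} *
          ∫⁻ ω, ENNReal.ofReal (hitReward ω) ^ r ∂ μ j := by
    intro j hj
    have hj0 : j ≠ 0 := Finset.ne_of_mem_erase hj
    have h1 : ∫⁻ q in {p : Fin (m+1) × ℝ | p.1 = j}, G q ∂ Q i
        = ∫⁻ q in {p : Fin (m+1) × ℝ | p.1 = j}, ∑ l ∈ Finset.range (r+1),
            (r.choose l : ℝ≥0∞) * ENNReal.ofReal q.2 ^ (r-l) *
              ∫⁻ ω, ENNReal.ofReal (hitReward ω) ^ l ∂ μ j ∂ Q i := by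
      apply setLIntegral_congr_fun (measurable_fst (measurableSet_singleton j))
      intro q hq
      have hq1 : q.1 = j := hq
      simp only [hG, hq1, if_neg hj0]
    have h2 : ∀ l, ∫⁻ q in {p : Fin (m+1) × ℝ | p.1 = j},
          (r.choose l : ℝ≥0∞) * ENNReal.ofReal q.2 ^ (r-l) *
            ∫⁻ ω, ENNReal.ofReal (hitReward ω) ^ l ∂ μ j ∂ Q i
        = (r.choose l : ℝ≥0∞) * sojournMoment Q i j (r-l) *
            ∫⁻ ω, ENNReal.ofReal (hitReward ω) ^ l ∂ μ j := by
      intro l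
      rw [lintegral_mul_const _
          (f := fun q : Fin (m+1) × ℝ => (r.choose l : ℝ≥0∞) * ENNReal.ofReal q.2 ^ (r-l))
          (by fun_prop),
        lintegral_const_mul _
          (f := fun q : Fin (m+1) × ℝ => ENNReal.ofReal q.2 ^ (r-l)) (by fun_prop)]
      rfl
    rw [h1, lintegral_finset_sum (Finset.range (r+1))
      (f := fun l (q : Fin (m+1) × ℝ) => (r.choose l : ℝ≥0∞) * ENNReal.ofReal q.2 ^ (r-l) *
        ∫⁻ ω, ENNReal.ofReal (hitReward ω) ^ l ∂ μ j)
      (fun l _ => by fun_prop)]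
    simp_rw [h2]
    rw [Finset.sum_range_succ]
    congr 1
    have h3 : sojournMoment Q i j (r - r) = Q i {q : Fin (m+1) × ℝ | q.1 = j} := by
      rw [Nat.sub_self]
      unfold sojournMoment
      simp [setLIntegral_one]
    rw [h3, Nat.choose_self, Nat.cast_one, one_mul]
  rw [hterm0, Finset.sum_congr rfl hterm, Finset.sum_add_distrib, ← add_assoc]
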